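/- Let X be a path-connected topological space, σ : X → X a homeomorphism with σ ∘ σ = id_X, and x ∈ X a point with σ(x) ≠ x. Let Γ be the set of endpoint-fixed homotopy classes of paths in X starting at x and ending at either x or σ(x), with multiplication defined as follows: for classes γ, δ ∈ Γ, if γ ends at x then γ·δ is the class of the concatenation of γ followed by δ, and if γ ends at σ(x) then γ·δ is the class of the concatenation of γ followed by σ ∘ δ. Then this multiplication makes Γ a group, the classes of loops based at x form a subgroup canonically isomorphic to the fundamental group π₁(X, x), and the endpoint map Γ → ℤ/2ℤ (sending classes ending at x to 0 and classes ending at σ(x) to 1) is a surjective group homomorphism with kernel π₁(X, x); that is, there is a short exact sequence 1 → π₁(X, x) → Γ → ℤ/2ℤ → 1. -/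

import Mathlib

open scoped ContinuousMap

/-- The set `Γ` of endpoint-fixed homotopy classes of paths in `X` starting at `x` and
ending at either `x` or `σ x`. -/
abbrev Gamma (X : Type*) [TopologicalSpace X] (σ : X → X) (x : X) : Type _ :=
  Path.Homotopic.Quotient x x ⊕ Path.Homotopic.Quotient x (σ x)

/-- Transport of a homotopy class of paths along an equality of endpoints. -/
def castQ {X : Type*} [TopologicalSpace X] {a b b' : X} (h : b = b')
    (q : Path.Homotopic.Quotient a b) : Path.Homotopic.Quotient a b' :=
  h ▸ q

/-- The multiplication on `Γ`: if `γ` ends at `x`, then `γ·δ` is the concatenation of `γ`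
followed by `δ`; if `γ` ends at `σ x`, then `γ·δ` is the concatenation of `γ` followed by
`σ ∘ δ`. -/
noncomputable def gmul {X : Type*} [TopologicalSpace X] (σ : X ≃ₜ X)
    (hσ : ∀ y, σ (σ y) = y) (x : X) :
    Gamma X σ x → Gamma X σ x → Gamma X σ x
  | Sum.inl γ, Sum.inl δ => Sum.inl (Path.Homotopic.Quotient.trans γ δ)
  | Sum.inl γ, Sum.inr δ => Sum.inr (Path.Homotopic.Quotient.trans γ δ)
  | Sum.inr γ, Sum.inl δ => Sum.inr (Path.Homotopic.Quotient.trans γ (Path.Homotopic.Quotient.map δ (σ : C(X, X))))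
  | Sum.inr γ, Sum.inr δ => Sum.inl (Path.Homotopic.Quotient.trans γ (castQ (hσ x) (Path.Homotopic.Quotient.map δ (σ : C(X, X)))))

/-- The endpoint map `Γ → ℤ/2ℤ`, sending classes of paths ending at `x` to `0` and classes
of paths ending at `σ x` to `1`. -/
def ep (X : Type*) [TopologicalSpace X] (σ : X → X) (x : X) :
    Gamma X σ x → ZMod 2 :=
  Sum.elim (fun _ => 0) (fun _ => 1)

namespace GammaAux

attribute [local instance] Path.Homotopic.setoid

variable {X Y : Type*} [TopologicalSpace X] [TopologicalSpace Y]

local notation "Q" => Path.Homotopic.Quotient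

theorem Path.Homotopic.trans_lift {x₀ x₁ x₂ : X} (P₀ : Path x₀ x₁) (P₁ : Path x₁ x₂) :
    (⟦P₀.trans P₁⟧ : Q x₀ x₂) = Path.Homotopic.Quotient.trans ⟦P₀⟧ ⟦P₁⟧ := rfl

theorem Path.Homotopic.map_lift {x₀ x₁ : X} (P₀ : Path x₀ x₁) (f : C(X, Y)) :
    (⟦P₀.map f.continuous⟧ : Q (f x₀) (f x₁)) = Path.Homotopic.Quotient.map ⟦P₀⟧ f := rfl

/-- Transport of a homotopy class along an equality of start points. -/
def castS {a a' b : X} (h : a = a') (q : Q a b) : Q a' b := h ▸ q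

theorem compQ_assoc {a b c d : X} (p : Q a b) (q : Q b c) (r : Q c d) :
    (p.trans q).trans r = p.trans (q.trans r) := by
  refine Quotient.inductionOn₃ p q r fun p q r => ?_
  rw [← Path.Homotopic.trans_lift, ← Path.Homotopic.trans_lift, ← Path.Homotopic.trans_lift,
    ← Path.Homotopic.trans_lift]
  exact Quotient.sound ⟨Path.Homotopy.transAssoc p q r⟩

theorem refl_compQ {a b : X} (p : Q a b) :
    Path.Homotopic.Quotient.trans (⟦Path.refl a⟧ : Q a a) p = p := by
  refine Quotient.inductionOn p fun p => ?_
  rw [← Path.Homotopic.trans_lift]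
  exact Quotient.sound ⟨Path.Homotopy.reflTrans p⟩

theorem compQ_refl {a b : X} (p : Q a b) :
    Path.Homotopic.Quotient.trans p (⟦Path.refl b⟧ : Q b b) = p := by
  refine Quotient.inductionOn p fun p => ?_
  rw [← Path.Homotopic.trans_lift]
  exact Quotient.sound ⟨Path.Homotopy.transRefl p⟩

/-- Reversal of homotopy classes of paths. -/
def symQ {a b : X} (p : Q a b) : Q b a :=
  Quotient.map Path.symm (fun _ _ h => Nonempty.map Path.Homotopy.symm₂ h) p

theorem symQ_compQ {a b : X} (p : Q a b) :
    (symQ p).trans p = (⟦Path.refl b⟧ : Q b b) := by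
  refine Quotient.inductionOn p fun p => ?_
  show Path.Homotopic.Quotient.trans ⟦p.symm⟧ ⟦p⟧ = _
  rw [← Path.Homotopic.trans_lift]
  exact Quotient.sound ⟨(Path.Homotopy.reflSymmTrans p).symm⟩

theorem compQ_symQ {a b : X} (p : Q a b) :
    p.trans (symQ p) = (⟦Path.refl a⟧ : Q a a) := by
  refine Quotient.inductionOn p fun p => ?_
  show Path.Homotopic.Quotient.trans ⟦p⟧ ⟦p.symm⟧ = _
  rw [← Path.Homotopic.trans_lift]
  exact Quotient.sound ⟨(Path.Homotopy.reflTransSymm p).symm⟩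

theorem mapFn_compQ (f : C(X, Y)) {a b c : X} (p : Q a b) (q : Q b c) :
    (p.trans q).map f = (p.map f).trans (q.map f) := by
  refine Quotient.inductionOn₂ p q fun p q => ?_
  rw [← Path.Homotopic.trans_lift, ← Path.Homotopic.map_lift, ← Path.Homotopic.map_lift,
    ← Path.Homotopic.map_lift, ← Path.Homotopic.trans_lift, Path.map_trans]

theorem mapFn_reflQ (f : C(X, Y)) (a : X) :
    Path.Homotopic.Quotient.map (⟦Path.refl a⟧ : Q a a) f = (⟦Path.refl (f a)⟧ : Q (f a) (f a)) := by
  rw [← Path.Homotopic.map_lift]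
  congr 1

theorem comp_castQ {a b c c' : X} (h : c = c') (p : Q a b) (q : Q b c) :
    p.trans (castQ h q) = castQ h (p.trans q) := by subst h; rfl

theorem castS_comp {a a' b c : X} (h : a = a') (p : Q a b) (q : Q b c) :
    (castS h p).trans q = castS h (p.trans q) := by subst h; rfl

theorem comp_mid_cast {a b b' c : X} (h : b = b') (p : Q a b) (q : Q b c) :
    p.trans q = (castQ h p).trans (castS h q) := by subst h; rfl

theorem mapFn_castQ (f : C(X, Y)) {a b b' : X} (h : b = b') (q : Q a b) :
    (castQ h q).map f = castQ (congrArg f h) (q.map f) := by subst h; rfl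

theorem mapFn_castS (f : C(X, Y)) {a a' b : X} (h : a = a') (q : Q a b) :
    (castS h q).map f = castS (congrArg f h) (q.map f) := by subst h; rfl

theorem castQ_castS {a a' b b' : X} (h : a = a') (h' : b = b') (q : Q a b) :
    castQ h' (castS h q) = castS h (castQ h' q) := by subst h; subst h'; rfl

theorem castS_castQ_reflQ {a a' : X} (h : a = a') :
    castS h (castQ h (⟦Path.refl a⟧ : Q a a)) = (⟦Path.refl a'⟧ : Q a' a') := by
  subst h; rfl

theorem mapFn_mapFn (σ : X ≃ₜ X) (hσ : ∀ y, σ (σ y) = y) {a b : X} (q : Q a b) :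
    castS (hσ a) (castQ (hσ b) ((q.map (σ : C(X, X))).map (σ : C(X, X)))) = q := by
  refine Quotient.inductionOn q fun p => ?_
  have h1 : Path.Homotopic.Quotient.map
      (Path.Homotopic.Quotient.map (⟦p⟧ : Q a b) (σ : C(X, X))) (σ : C(X, X)) =
      (⟦(p.map σ.continuous).map σ.continuous⟧ : Q (σ (σ a)) (σ (σ b))) := by
    rw [← Path.Homotopic.map_lift, ← Path.Homotopic.map_lift]
    rfl
  rw [h1]
  have h2 : ∀ {u v u' v' : X} (hu : u = u') (hv : v = v') (r : Path u v),
      castS hu (castQ hv (⟦r⟧ : Q u v)) = ⟦r.cast hu.symm hv.symm⟧ := by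
    intro u v u' v' hu hv r
    subst hu; subst hv
    rfl
  rw [h2 (hσ a) (hσ b)]
  congr 1
  ext t
  exact hσ (p t)

end GammaAux

/-- Let `X` be a path-connected space, `σ : X → X` a homeomorphism with `σ ∘ σ = id`, and
`x` a point with `σ x ≠ x`.  Then the multiplication `gmul` makes `Γ` a group, the classes
of loops based at `x` form a subgroup canonically isomorphic to `π₁(X, x)`, and the endpoint
map `Γ → ℤ/2ℤ` is a surjective homomorphism with kernel `π₁(X, x)`; i.e. there is a short
exact sequence `1 → π₁(X, x) → Γ → ℤ/2ℤ → 1`. -/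
theorem gamma_group_extension (X : Type*) [TopologicalSpace X] [PathConnectedSpace X]
    (σ : X ≃ₜ X) (hσ : ∀ y, σ (σ y) = y) (x : X) (hx : σ x ≠ x) :
    -- `gmul` is a group law on `Γ`, with identity a class of a loop at `x`
    (∃ (one : Gamma X σ x) (inv : Gamma X σ x → Gamma X σ x),
      (∀ a b c : Gamma X σ x,
        gmul σ hσ x (gmul σ hσ x a b) c = gmul σ hσ x a (gmul σ hσ x b c)) ∧
      (∀ a : Gamma X σ x, gmul σ hσ x one a = a) ∧
      (∀ a : Gamma X σ x, gmul σ hσ x a one = a) ∧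
      (∀ a : Gamma X σ x, gmul σ hσ x (inv a) a = one) ∧
      (∀ a : Gamma X σ x, gmul σ hσ x a (inv a) = one) ∧
      one = Sum.inl (⟦Path.refl x⟧ : Path.Homotopic.Quotient x x)) ∧
    -- the classes of loops based at `x` form a subgroup canonically isomorphic to `π₁(X,x)`
    (∃ j : FundamentalGroup X x → Gamma X σ x,
      Function.Injective j ∧
      Set.range j = Set.range (Sum.inl : Path.Homotopic.Quotient x x → Gamma X σ x) ∧
      (∀ a b : FundamentalGroup X x, j (a * b) = gmul σ hσ x (j a) (j b))) ∧
    -- the endpoint map is a surjective homomorphism with kernel the classes of loops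
    Function.Surjective (ep X σ x) ∧
    (∀ a b : Gamma X σ x, ep X σ x (gmul σ hσ x a b) = ep X σ x a + ep X σ x b) ∧
    (∀ a : Gamma X σ x, ep X σ x a = 0 ↔
      a ∈ Set.range (Sum.inl : Path.Homotopic.Quotient x x → Gamma X σ x)) := by
  classical
  open GammaAux CategoryTheory in
  refine ⟨?_, ?_, ?_, ?_, ?_⟩
  · -- group law
    refine ⟨Sum.inl ⟦Path.refl x⟧,
      fun a => Sum.elim (fun p => Sum.inl (symQ p))
        (fun p => Sum.inr (castS (hσ x)
          (Path.Homotopic.Quotient.map (symQ p) (σ : C(X, X))))) a,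
      ?_, ?_, ?_, ?_, ?_, rfl⟩
    · -- associativity
      intro a b c
      rcases a with a | a <;> rcases b with b | b <;> rcases c with c | c <;>
        simp only [gmul]
      · rw [compQ_assoc]
      · rw [compQ_assoc]
      · rw [compQ_assoc]
      · rw [compQ_assoc]
      · rw [mapFn_compQ, compQ_assoc]
      · rw [mapFn_compQ, ← comp_castQ, compQ_assoc]
      · rw [mapFn_compQ, ← comp_castQ,
          comp_mid_cast (hσ x) (Path.Homotopic.Quotient.map b (σ : C(X, X))),
          mapFn_mapFn σ hσ c, compQ_assoc]
      · rw [mapFn_compQ, mapFn_castQ,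
          comp_mid_cast (hσ x) (Path.Homotopic.Quotient.map b (σ : C(X, X))),
          mapFn_mapFn σ hσ c, compQ_assoc]
    · -- one_mul
      intro a
      rcases a with a | a <;> simp only [gmul] <;> rw [refl_compQ]
    · -- mul_one
      intro a
      rcases a with a | a <;> simp only [gmul]
      · rw [compQ_refl]
      · rw [mapFn_reflQ]
        exact congrArg Sum.inr (compQ_refl a)
    · -- inv_mul
      intro a
      rcases a with a | a <;> simp only [gmul, Sum.elim_inl, Sum.elim_inr]
      · rw [symQ_compQ]
      · rw [castS_comp, comp_castQ, ← mapFn_compQ, symQ_compQ, mapFn_reflQ]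
        exact congrArg Sum.inl (castS_castQ_reflQ (hσ x))
    · -- mul_inv
      intro a
      rcases a with a | a <;> simp only [gmul, Sum.elim_inl, Sum.elim_inr]
      · rw [compQ_symQ]
      · rw [mapFn_castS, castQ_castS, mapFn_mapFn σ hσ (symQ a), compQ_symQ]
  · -- the fundamental group embeds
    refine ⟨fun a => Sum.inl (((a⁻¹ : FundamentalGroup X x) :
        (FundamentalGroupoid.mk x) ⟶ (FundamentalGroupoid.mk x)) :
        Path.Homotopic.Quotient x x), ?_, ?_, ?_⟩
    · intro a b hab
      have h1 : (a⁻¹ : FundamentalGroup X x) = (b⁻¹ : FundamentalGroup X x) := Sum.inl.inj hab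
      have h2 : a⁻¹ = b⁻¹ := h1
      exact inv_injective h2
    · ext g
      constructor
      · rintro ⟨a, rfl⟩; exact ⟨_, rfl⟩
      · rintro ⟨q, rfl⟩
        refine ⟨(((q : (FundamentalGroupoid.mk x) ⟶ (FundamentalGroupoid.mk x)) :
            FundamentalGroup X x))⁻¹, ?_⟩
        beta_reduce
        exact congrArg Sum.inl (inv_inv (G := FundamentalGroup X x) q)
    · intro a b
      beta_reduce
      rw [mul_inv_rev]
      rfl
  · -- surjectivity of ep
    intro n
    fin_cases n
    · exact ⟨Sum.inl ⟦Path.refl x⟧, rfl⟩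
    · exact ⟨Sum.inr ⟦PathConnectedSpace.somePath x (σ x)⟧, rfl⟩
  · -- ep is a homomorphism
    intro a b
    rcases a with a | a <;> rcases b with b | b <;>
      simp only [gmul, ep, Sum.elim_inl, Sum.elim_inr] <;> decide
  · -- kernel of ep
    intro a
    rcases a with p | p
    · exact ⟨fun _ => ⟨p, rfl⟩, fun _ => rfl⟩
    · constructor
      · intro h
        have h1 : (1 : ZMod 2) = 0 := h
        exact absurd h1 (by decide)
      · rintro ⟨y, hy⟩; exact (Sum.inl_ne_inr hy).elim
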